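/- Let Z be the set-function K ↦ Z(K) associated to a binomial system p_1,…,p_n with p_n = x_n^ℓ − c_n x_{n−1}^m (ℓ, m > 0), and let Z̃ be the analogous function for the parametrically reduced system p̃_1,…,p̃_{n−1} in variables u_1,…,u_{n−1} obtained via x_i ↦ u_i (i ≤ n−2), x_{n−1} ↦ u_{n−1}^{ℓ'}, x_n ↦ u_{n−1}^{m'}. Then: (a) if there exists K ⊆ [n] with |Z(K)| > |K|, there exists K̃ ⊆ [n−1] with |Z̃(K̃)| > |K̃|; and (b) conversely, if there exists K̃ ⊆ [n−1] with |Z̃(K̃)| > |K̃|, there exists K ⊆ [n] with |Z(K)| > |K|. -/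

import Mathlib

private def mergeF (n : ℕ) : Fin (n + 2) → Fin (n + 1) := fun l => ⟨min l n, by omega⟩

private lemma partA (n : ℕ) (ℓ m : ℕ) (hℓ : 0 < ℓ) (hm : 0 < m)
    (α β : Fin (n + 2) → Fin (n + 2) → ℕ)
    (hαlast : α (Fin.last (n + 1)) =
      fun l : Fin (n + 2) => if (l : ℕ) = n + 1 then ℓ else 0)
    (hβlast : β (Fin.last (n + 1)) =
      fun l : Fin (n + 2) => if (l : ℕ) = n then m else 0)
    (αt βt : Fin (n + 1) → Fin (n + 1) → ℕ)
    (hα1 : ∀ (j : Fin (n + 1)) (l : Fin (n + 2)), α j.castSucc l ≠ 0 → αt j (mergeF n l) ≠ 0)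
    (hβ1 : ∀ (j : Fin (n + 1)) (l : Fin (n + 2)), β j.castSucc l ≠ 0 → βt j (mergeF n l) ≠ 0)
    (K : Set (Fin (n + 2)))
    (hK : K.ncard < {j | (∃ l ∈ K, α j l ≠ 0) ∧ ∃ l ∈ K, β j l ≠ 0}.ncard) :
    ∃ Kt : Set (Fin (n + 1)),
        Kt.ncard < {j | (∃ l ∈ Kt, αt j l ≠ 0) ∧ ∃ l ∈ Kt, βt j l ≠ 0}.ncard := by
  set en : Fin (n + 2) := ⟨n, by omega⟩ with hen
  set en1 : Fin (n + 2) := ⟨n + 1, by omega⟩ with hen1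
  set Z : Set (Fin (n + 2)) := {j | (∃ l ∈ K, α j l ≠ 0) ∧ ∃ l ∈ K, β j l ≠ 0} with hZ
  set Kt : Set (Fin (n + 1)) := mergeF n '' K with hKt
  refine ⟨Kt, ?_⟩
  set Zt : Set (Fin (n + 1)) := {j | (∃ l ∈ Kt, αt j l ≠ 0) ∧ ∃ l ∈ Kt, βt j l ≠ 0} with hZt
  set W : Set (Fin (n + 1)) := {j | j.castSucc ∈ Z} with hW
  have hWZt : W ⊆ Zt := by
    rintro j ⟨⟨l, hlK, hla⟩, ⟨l', hl'K, hl'b⟩⟩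
    exact ⟨⟨mergeF n l, ⟨l, hlK, rfl⟩, hα1 j l hla⟩,
      ⟨mergeF n l', ⟨l', hl'K, rfl⟩, hβ1 j l' hl'b⟩⟩
  have hWZt' : W.ncard ≤ Zt.ncard := Set.ncard_le_ncard hWZt (Set.toFinite _)
  have hsub : Z ⊆ insert (Fin.last (n + 1)) (Fin.castSucc '' W) := by
    intro j hj
    by_cases hj2 : j = Fin.last (n + 1)
    · exact Set.mem_insert_iff.mpr (Or.inl hj2)
    · have hjlt : (j : ℕ) < n + 1 := by
        have h1 := j.isLt
        rcases Nat.lt_or_ge (j : ℕ) (n + 1) with h | h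
        · exact h
        · exact absurd (Fin.ext (by omega : (j : ℕ) = n + 1)) hj2
      refine Set.mem_insert_iff.mpr (Or.inr ⟨⟨j, hjlt⟩, ?_, Fin.ext rfl⟩)
      show Fin.castSucc _ ∈ Z
      have h2 : Fin.castSucc (⟨(j : ℕ), hjlt⟩ : Fin (n + 1)) = j := Fin.ext rfl
      rw [h2]; exact hj
  have hZle : Z.ncard ≤ W.ncard + 1 := by
    calc Z.ncard ≤ (insert (Fin.last (n + 1)) (Fin.castSucc '' W)).ncard :=
          Set.ncard_le_ncard hsub (Set.toFinite _)
      _ ≤ (Fin.castSucc '' W).ncard + 1 := Set.ncard_insert_le _ _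
      _ = W.ncard + 1 := by
          rw [Set.ncard_image_of_injective _ (Fin.castSucc_injective _)]
  have hKtle : Kt.ncard ≤ K.ncard := Set.ncard_image_le (Set.toFinite _)
  by_cases hcase : en ∈ K ∧ en1 ∈ K
  · have himg : Kt = mergeF n '' (K \ {en1}) := by
      apply Set.Subset.antisymm
      · rintro _ ⟨l, hlK, rfl⟩
        by_cases hl : l = en1
        · refine ⟨en, ⟨hcase.1, by simp [hen, hen1]⟩, ?_⟩
          subst hl
          apply Fin.ext
          simp [mergeF, hen, hen1]
        · exact ⟨l, ⟨hlK, hl⟩, rfl⟩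
      · exact Set.image_mono Set.diff_subset
    have hKtle2 : Kt.ncard ≤ K.ncard - 1 := by
      rw [himg]
      calc (mergeF n '' (K \ {en1})).ncard ≤ (K \ {en1}).ncard :=
            Set.ncard_image_le (Set.toFinite _)
        _ = K.ncard - 1 := Set.ncard_diff_singleton_of_mem hcase.2
    have hK1 : 1 ≤ K.ncard := by
      have := (Set.ncard_pos (Set.toFinite K)).mpr ⟨en1, hcase.2⟩
      omega
    omega
  · have hlast : Fin.last (n + 1) ∉ Z := by
      rintro ⟨⟨l, hlK, hla⟩, ⟨l', hl'K, hl'b⟩⟩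
      rw [hαlast] at hla
      rw [hβlast] at hl'b
      simp only at hla hl'b
      by_cases h1 : (l : ℕ) = n + 1
      · by_cases h2 : (l' : ℕ) = n
        · exact hcase ⟨by rwa [show en = l' from Fin.ext h2.symm],
            by rwa [show en1 = l from Fin.ext h1.symm]⟩
        · rw [if_neg h2] at hl'b; exact hl'b rfl
      · rw [if_neg h1] at hla; exact hla rfl
    have hZW : Z.ncard ≤ W.ncard := by
      have hsub2 : Z ⊆ Fin.castSucc '' W := by
        intro j hj
        rcases Set.mem_insert_iff.mp (hsub hj) with h | h
        · exact absurd (h ▸ hj) hlast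
        · exact h
      calc Z.ncard ≤ (Fin.castSucc '' W).ncard := Set.ncard_le_ncard hsub2 (Set.toFinite _)
        _ = W.ncard := Set.ncard_image_of_injective _ (Fin.castSucc_injective _)
    omega

set_option maxHeartbeats 2000000 in
private lemma partB (n : ℕ) (ℓ m : ℕ) (hℓ : 0 < ℓ) (hm : 0 < m)
    (α β : Fin (n + 2) → Fin (n + 2) → ℕ)
    (hαlast : α (Fin.last (n + 1)) =
      fun l : Fin (n + 2) => if (l : ℕ) = n + 1 then ℓ else 0)
    (hβlast : β (Fin.last (n + 1)) =
      fun l : Fin (n + 2) => if (l : ℕ) = n then m else 0)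
    (αt βt : Fin (n + 1) → Fin (n + 1) → ℕ)
    (hα2a : ∀ (j : Fin (n + 1)) (l : Fin (n + 1)) (h : (l : ℕ) < n),
      αt j l ≠ 0 → α j.castSucc ⟨l, by omega⟩ ≠ 0)
    (hβ2a : ∀ (j : Fin (n + 1)) (l : Fin (n + 1)) (h : (l : ℕ) < n),
      βt j l ≠ 0 → β j.castSucc ⟨l, by omega⟩ ≠ 0)
    (hα2b : ∀ j : Fin (n + 1), αt j ⟨n, by omega⟩ ≠ 0 →
      α j.castSucc ⟨n, by omega⟩ ≠ 0 ∨ α j.castSucc ⟨n + 1, by omega⟩ ≠ 0)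
    (hβ2b : ∀ j : Fin (n + 1), βt j ⟨n, by omega⟩ ≠ 0 →
      β j.castSucc ⟨n, by omega⟩ ≠ 0 ∨ β j.castSucc ⟨n + 1, by omega⟩ ≠ 0)
    (Kt : Set (Fin (n + 1)))
    (hKt : Kt.ncard < {j | (∃ l ∈ Kt, αt j l ≠ 0) ∧ ∃ l ∈ Kt, βt j l ≠ 0}.ncard) :
    ∃ K : Set (Fin (n + 2)),
        K.ncard < {j | (∃ l ∈ K, α j l ≠ 0) ∧ ∃ l ∈ K, β j l ≠ 0}.ncard := by
  set en : Fin (n + 2) := ⟨n, by omega⟩ with hen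
  set en1 : Fin (n + 2) := ⟨n + 1, by omega⟩ with hen1
  set tn : Fin (n + 1) := ⟨n, by omega⟩ with htn
  set Zt : Set (Fin (n + 1)) := {j | (∃ l ∈ Kt, αt j l ≠ 0) ∧ ∃ l ∈ Kt, βt j l ≠ 0} with hZt
  by_cases hmem : tn ∈ Kt
  · set K : Set (Fin (n + 2)) := insert en1 (Fin.castSucc '' Kt) with hKdef
    refine ⟨K, ?_⟩
    set Z : Set (Fin (n + 2)) := {j | (∃ l ∈ K, α j l ≠ 0) ∧ ∃ l ∈ K, β j l ≠ 0} with hZ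
    have henK : en ∈ K := by
      refine Set.mem_insert_iff.mpr (Or.inr ⟨tn, hmem, ?_⟩)
      apply Fin.ext; simp [htn, hen]
    have hen1K : en1 ∈ K := Set.mem_insert _ _
    have hlastZ : Fin.last (n + 1) ∈ Z := by
      refine ⟨⟨en1, hen1K, ?_⟩, ⟨en, henK, ?_⟩⟩
      · rw [hαlast]; simp [hen1]; omega
      · rw [hβlast]; simp [hen]; omega
    have hsub : insert (Fin.last (n + 1)) (Fin.castSucc '' Zt) ⊆ Z := by
      intro j hj
      rcases Set.mem_insert_iff.mp hj with h | ⟨j', hj', rfl⟩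
      · rw [h]; exact hlastZ
      · obtain ⟨⟨l, hlK, hla⟩, ⟨l', hl'K, hl'b⟩⟩ := hj'
        constructor
        · by_cases hlt : (l : ℕ) < n
          · refine ⟨Fin.castSucc l, Set.mem_insert_iff.mpr (Or.inr ⟨l, hlK, rfl⟩), ?_⟩
            have h3 : Fin.castSucc l = (⟨(l : ℕ), by omega⟩ : Fin (n + 2)) := Fin.ext rfl
            rw [h3]
            exact hα2a j' l hlt hla
          · have hltn : l = tn := Fin.ext (by have := l.isLt; simp only [htn]; omega)
            rcases hα2b j' (by rw [hltn] at hla; exact hla) with h | h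
            · exact ⟨en, henK, h⟩
            · exact ⟨en1, hen1K, h⟩
        · by_cases hlt : (l' : ℕ) < n
          · refine ⟨Fin.castSucc l', Set.mem_insert_iff.mpr (Or.inr ⟨l', hl'K, rfl⟩), ?_⟩
            have h3 : Fin.castSucc l' = (⟨(l' : ℕ), by omega⟩ : Fin (n + 2)) := Fin.ext rfl
            rw [h3]
            exact hβ2a j' l' hlt hl'b
          · have hltn : l' = tn := Fin.ext (by have := l'.isLt; simp only [htn]; omega)
            rcases hβ2b j' (by rw [hltn] at hl'b; exact hl'b) with h | h
            · exact ⟨en, henK, h⟩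
            · exact ⟨en1, hen1K, h⟩
    have hlastnot : Fin.last (n + 1) ∉ Fin.castSucc '' Zt := by
      rintro ⟨j, _, hj⟩
      exact absurd hj (Fin.castSucc_lt_last j).ne
    have hZge : Zt.ncard + 1 ≤ Z.ncard := by
      calc Zt.ncard + 1 = (Fin.castSucc '' Zt).ncard + 1 := by
            rw [Set.ncard_image_of_injective _ (Fin.castSucc_injective _)]
        _ = (insert (Fin.last (n + 1)) (Fin.castSucc '' Zt)).ncard :=
            (Set.ncard_insert_of_notMem hlastnot (Set.toFinite _)).symm
        _ ≤ Z.ncard := Set.ncard_le_ncard hsub (Set.toFinite _)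
    have hKle : K.ncard ≤ Kt.ncard + 1 := by
      calc K.ncard ≤ (Fin.castSucc '' Kt).ncard + 1 := Set.ncard_insert_le _ _
        _ = Kt.ncard + 1 := by
            rw [Set.ncard_image_of_injective _ (Fin.castSucc_injective _)]
    omega
  · set K : Set (Fin (n + 2)) := Fin.castSucc '' Kt with hKdef
    refine ⟨K, ?_⟩
    set Z : Set (Fin (n + 2)) := {j | (∃ l ∈ K, α j l ≠ 0) ∧ ∃ l ∈ K, β j l ≠ 0} with hZ
    have hsub : Fin.castSucc '' Zt ⊆ Z := by
      rintro _ ⟨j, hj, rfl⟩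
      obtain ⟨⟨l, hlK, hla⟩, ⟨l', hl'K, hl'b⟩⟩ := hj
      have hlt : (l : ℕ) < n := by
        have h1 := l.isLt
        have h2 : l ≠ tn := fun h => hmem (h ▸ hlK)
        have h3 : (l : ℕ) ≠ n := fun h => h2 (Fin.ext h)
        omega
      have hlt' : (l' : ℕ) < n := by
        have h1 := l'.isLt
        have h2 : l' ≠ tn := fun h => hmem (h ▸ hl'K)
        have h3 : (l' : ℕ) ≠ n := fun h => h2 (Fin.ext h)
        omega
      constructor
      · refine ⟨Fin.castSucc l, ⟨l, hlK, rfl⟩, ?_⟩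
        have h3 : Fin.castSucc l = (⟨(l : ℕ), by omega⟩ : Fin (n + 2)) := Fin.ext rfl
        rw [h3]
        exact hα2a j l hlt hla
      · refine ⟨Fin.castSucc l', ⟨l', hl'K, rfl⟩, ?_⟩
        have h3 : Fin.castSucc l' = (⟨(l' : ℕ), by omega⟩ : Fin (n + 2)) := Fin.ext rfl
        rw [h3]
        exact hβ2a j l' hlt' hl'b
    have hZge : Zt.ncard ≤ Z.ncard := by
      calc Zt.ncard = (Fin.castSucc '' Zt).ncard :=
            (Set.ncard_image_of_injective _ (Fin.castSucc_injective _)).symm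
        _ ≤ Z.ncard := Set.ncard_le_ncard hsub (Set.toFinite _)
    have hKeq : K.ncard = Kt.ncard := Set.ncard_image_of_injective _ (Fin.castSucc_injective _)
    omega

/-- Behaviour of the Fischer–Shapiro sets `Z(K)` under parametric reduction: with
`p_{n+2} = x_{n+2}^ℓ - c x_{n+1}^m` and the reduced system obtained via
`x_i ↦ u_i` (`i ≤ n`), `x_{n+1} ↦ u_{n+1}^{ℓ'}`, `x_{n+2} ↦ u_{n+1}^{m'}`:
(a) if some `K` satisfies `|Z(K)| > |K|` then some `K̃` satisfies `|Z̃(K̃)| > |K̃|`, and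
(b) conversely.  (Indices are `0`-based: the system has `n+2` binomials and variables,
the reduced one `n+1`.) -/
theorem stmt6 (n : ℕ) (ℓ m : ℕ) (hℓ : 0 < ℓ) (hm : 0 < m)
    (q ℓ' m' : ℕ) (hq : q = Nat.gcd ℓ m) (hℓ' : ℓ' = ℓ / q) (hm' : m' = m / q)
    (α β : Fin (n + 2) → Fin (n + 2) → ℕ)
    (hαlast : α (Fin.last (n + 1)) =
      fun l : Fin (n + 2) => if (l : ℕ) = n + 1 then ℓ else 0)
    (hβlast : β (Fin.last (n + 1)) =
      fun l : Fin (n + 2) => if (l : ℕ) = n then m else 0)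
    (αt βt : Fin (n + 1) → Fin (n + 1) → ℕ)
    (hαt : ∀ (j : Fin (n + 1)) (l : Fin (n + 1)),
      αt j l = if h : (l : ℕ) < n then α j.castSucc ⟨l, by omega⟩
        else ℓ' * α j.castSucc ⟨n, by omega⟩ + m' * α j.castSucc ⟨n + 1, by omega⟩)
    (hβt : ∀ (j : Fin (n + 1)) (l : Fin (n + 1)),
      βt j l = if h : (l : ℕ) < n then β j.castSucc ⟨l, by omega⟩
        else ℓ' * β j.castSucc ⟨n, by omega⟩ + m' * β j.castSucc ⟨n + 1, by omega⟩) :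
    ((∃ K : Set (Fin (n + 2)),
        K.ncard < {j | (∃ l ∈ K, α j l ≠ 0) ∧ ∃ l ∈ K, β j l ≠ 0}.ncard) →
      ∃ Kt : Set (Fin (n + 1)),
        Kt.ncard < {j | (∃ l ∈ Kt, αt j l ≠ 0) ∧ ∃ l ∈ Kt, βt j l ≠ 0}.ncard) ∧
    ((∃ Kt : Set (Fin (n + 1)),
        Kt.ncard < {j | (∃ l ∈ Kt, αt j l ≠ 0) ∧ ∃ l ∈ Kt, βt j l ≠ 0}.ncard) →
      ∃ K : Set (Fin (n + 2)),
        K.ncard < {j | (∃ l ∈ K, α j l ≠ 0) ∧ ∃ l ∈ K, β j l ≠ 0}.ncard) := by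
  have hq0 : 0 < q := by subst hq; exact Nat.gcd_pos_of_pos_left _ hℓ
  have hℓ'0 : 0 < ℓ' := by
    subst hℓ'; exact Nat.div_pos (Nat.le_of_dvd hℓ (hq ▸ Nat.gcd_dvd_left ℓ m)) hq0
  have hm'0 : 0 < m' := by
    subst hm'; exact Nat.div_pos (Nat.le_of_dvd hm (hq ▸ Nat.gcd_dvd_right ℓ m)) hq0
  -- generic support-transfer lemmas
  have key1 : ∀ (γ : Fin (n + 2) → ℕ) (γt : Fin (n + 1) → ℕ),
      (∀ l : Fin (n + 1), γt l = if h : (l : ℕ) < n then γ ⟨l, by omega⟩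
        else ℓ' * γ ⟨n, by omega⟩ + m' * γ ⟨n + 1, by omega⟩) →
      ∀ l : Fin (n + 2), γ l ≠ 0 → γt (mergeF n l) ≠ 0 := by
    intro γ γt hγ l hl
    rw [hγ]
    rcases lt_or_ge (l : ℕ) n with hc | hc
    · rw [dif_pos (show ((mergeF n l : Fin (n + 1)) : ℕ) < n by simp only [mergeF]; omega)]
      have h2 : (⟨((mergeF n l : Fin (n + 1)) : ℕ), by omega⟩ : Fin (n + 2)) = l := by
        apply Fin.ext; simp only [mergeF]; omega
      rw [h2]; exact hl
    · rw [dif_neg (show ¬ ((mergeF n l : Fin (n + 1)) : ℕ) < n by simp only [mergeF]; omega)]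
      have hl2 : (l : ℕ) = n ∨ (l : ℕ) = n + 1 := by omega
      rcases hl2 with h | h
      · have hle : (⟨n, by omega⟩ : Fin (n + 2)) = l := Fin.ext h.symm
        rw [hle]
        have h1 : ℓ' * γ l ≠ 0 := Nat.mul_ne_zero (by omega) hl
        omega
      · have hle : (⟨n + 1, by omega⟩ : Fin (n + 2)) = l := Fin.ext h.symm
        rw [hle]
        have h1 : m' * γ l ≠ 0 := Nat.mul_ne_zero (by omega) hl
        omega
  have key2a : ∀ (γ : Fin (n + 2) → ℕ) (γt : Fin (n + 1) → ℕ),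
      (∀ l : Fin (n + 1), γt l = if h : (l : ℕ) < n then γ ⟨l, by omega⟩
        else ℓ' * γ ⟨n, by omega⟩ + m' * γ ⟨n + 1, by omega⟩) →
      ∀ (l : Fin (n + 1)) (h : (l : ℕ) < n), γt l ≠ 0 → γ ⟨l, by omega⟩ ≠ 0 := by
    intro γ γt hγ l hlt hl
    rw [hγ, dif_pos hlt] at hl
    exact hl
  have key2b : ∀ (γ : Fin (n + 2) → ℕ) (γt : Fin (n + 1) → ℕ),
      (∀ l : Fin (n + 1), γt l = if h : (l : ℕ) < n then γ ⟨l, by omega⟩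
        else ℓ' * γ ⟨n, by omega⟩ + m' * γ ⟨n + 1, by omega⟩) →
      γt ⟨n, by omega⟩ ≠ 0 → γ ⟨n, by omega⟩ ≠ 0 ∨ γ ⟨n + 1, by omega⟩ ≠ 0 := by
    intro γ γt hγ hl
    rw [hγ, dif_neg (by simp)] at hl
    by_contra hcon
    push_neg at hcon
    rw [hcon.1, hcon.2] at hl
    simp at hl
  constructor
  · rintro ⟨K, hK⟩
    exact partA n ℓ m hℓ hm α β hαlast hβlast αt βt
      (fun j l hl => key1 _ _ (hαt j) l hl)
      (fun j l hl => key1 _ _ (hβt j) l hl) K hK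
  · rintro ⟨Kt, hKt⟩
    exact partB n ℓ m hℓ hm α β hαlast hβlast αt βt
      (fun j l h hl => key2a _ _ (hαt j) l h hl)
      (fun j l h hl => key2a _ _ (hβt j) l h hl)
      (fun j hl => key2b _ _ (hαt j) hl)
      (fun j hl => key2b _ _ (hβt j) hl) Kt hKt
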